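/- The exact reachable set of a ReLU layer on a convex polytope S ⊆ ℝ^n equals the union over sign patterns ε ∈ {±1}^n of relu(S ∩ O_ε), where O_ε is the closed orthant with signs ε; each piece relu(S ∩ O_ε) is a convex polytope, hence the output reachable set is a finite union of at most 2^n convex polytopes. -/

import Mathlib

open Finset

lemma hull_inter_halfspace {E : Type*} [AddCommGroup E] [Module ℝ E]
    (f : E →ₗ[ℝ] ℝ) (c : ℝ) (V : Finset E) :
    ∃ W : Finset E,
      convexHull ℝ (V : Set E) ∩ {x | f x ≤ c} = convexHull ℝ (W : Set E) := by
  classical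
  set A : Finset E := V.filter (fun v => f v ≤ c) with hA
  set B : Finset E := V.filter (fun v => ¬ f v ≤ c) with hB
  have hAmem : ∀ v ∈ A, v ∈ V ∧ f v ≤ c := fun v hv => by
    simpa [hA] using (Finset.mem_filter.mp hv)
  have hBmem : ∀ w ∈ B, w ∈ V ∧ c < f w := fun w hw => by
    have := Finset.mem_filter.mp hw
    exact ⟨this.1, not_le.mp this.2⟩
  set m : E × E → E := fun p => p.1 + ((c - f p.1) / (f p.2 - f p.1)) • (p.2 - p.1) with hm
  refine ⟨A ∪ (A ×ˢ B).image m, ?_⟩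
  have hmseg : ∀ v ∈ A, ∀ w ∈ B, m (v, w) ∈ convexHull ℝ (V : Set E) ∧ f (m (v, w)) = c := by
    intro v hv w hw
    obtain ⟨hvV, hvc⟩ := hAmem v hv
    obtain ⟨hwV, hwc⟩ := hBmem w hw
    have hd : (0:ℝ) < f w - f v := by linarith
    have ht0 : (0:ℝ) ≤ (c - f v) / (f w - f v) := div_nonneg (by linarith) hd.le
    have ht1 : (c - f v) / (f w - f v) ≤ 1 := (div_le_one hd).mpr (by linarith)
    constructor
    · have : m (v, w) ∈ segment ℝ v w := by
        rw [segment_eq_image']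
        exact ⟨(c - f v) / (f w - f v), ⟨ht0, ht1⟩, rfl⟩
      exact (convex_convexHull ℝ _).segment_subset (subset_convexHull ℝ _ hvV)
        (subset_convexHull ℝ _ hwV) this
    · simp only [hm, map_add, map_smul, map_sub, smul_eq_mul]
      rw [div_mul_cancel₀ _ (ne_of_gt hd)]
      ring
  apply Set.Subset.antisymm
  · -- hard direction
    rintro x ⟨hxV, hxc⟩
    simp only [Set.mem_setOf_eq] at hxc
    rw [Finset.convexHull_eq] at hxV
    obtain ⟨a, ha0, ha1, hax⟩ := hxV
    rw [Finset.centerMass_eq_of_sum_1 _ _ ha1] at hax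
    simp only [id] at hax
    set D : ℝ := ∑ v ∈ A, a v * (c - f v) with hD
    set S : ℝ := ∑ w ∈ B, a w * (f w - c) with hS
    set tB : ℝ := ∑ w ∈ B, a w with htB
    set zB : E := ∑ w ∈ B, a w • w with hzB
    have hsplit1 : (∑ v ∈ A, a v) + tB = 1 := by
      rw [htB, hA, hB, Finset.sum_filter_add_sum_filter_not]; exact ha1
    have hsplitx : (∑ v ∈ A, a v • v) + zB = x := by
      rw [hzB, hA, hB, Finset.sum_filter_add_sum_filter_not]; exact hax
    have hfx : f x = ∑ v ∈ V, a v * f v := by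
      rw [← hax, map_sum]; simp [smul_eq_mul]
    have hDS : D - S = c - f x := by
      rw [hD, hS, hfx]
      have : (∑ v ∈ A, a v * (c - f v)) + ∑ w ∈ B, a w * (c - f w)
          = ∑ v ∈ V, a v * (c - f v) := by
        rw [hA, hB, Finset.sum_filter_add_sum_filter_not]
      have h2 : ∑ v ∈ V, a v * (c - f v) = c - ∑ v ∈ V, a v * f v := by
        rw [Finset.sum_congr rfl (fun v _ => mul_sub (a v) c (f v)),
          Finset.sum_sub_distrib, ← Finset.sum_mul, ha1, one_mul]
      have h3 : ∑ w ∈ B, a w * (c - f w) = -S := by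
        rw [hS, ← Finset.sum_neg_distrib]
        exact Finset.sum_congr rfl fun w _ => by ring
      linarith [this, h2, h3]
    have hS0 : 0 ≤ S := Finset.sum_nonneg fun w hw =>
      mul_nonneg (ha0 w (hBmem w hw).1) (by linarith [(hBmem w hw).2])
    have hSD : S ≤ D := by linarith [hDS, hxc]
    have hD0 : 0 ≤ D := le_trans hS0 hSD
    by_cases hDz : D = 0
    · -- all mass on A
      have hSz : S = 0 := le_antisymm (hDz ▸ hSD) hS0
      have haB : ∀ w ∈ B, a w = 0 := by
        intro w hw
        have := (Finset.sum_eq_zero_iff_of_nonneg (fun w hw =>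
          mul_nonneg (ha0 w (hBmem w hw).1) (by linarith [(hBmem w hw).2]))).mp hSz w hw
        have hc := (hBmem w hw).2
        rcases mul_eq_zero.mp this with h | h
        · exact h
        · linarith
      have hzB0 : zB = 0 := Finset.sum_eq_zero fun w hw => by rw [haB w hw, zero_smul]
      have htB0 : tB = 0 := Finset.sum_eq_zero haB
      apply convexHull_mono (Finset.coe_subset.mpr Finset.subset_union_left)
      rw [Finset.convexHull_eq]
      refine ⟨a, fun v hv => ha0 v (hAmem v hv).1, by linarith, ?_⟩
      rw [Finset.centerMass_eq_of_sum_1 _ _ (by linarith)]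
      simp only [id]
      rw [← hsplitx, hzB0, add_zero]
    · have hDpos : 0 < D := lt_of_le_of_ne hD0 (Ne.symm hDz)
      set r : E → ℝ := fun v => if f v < c then a v * (1 - S / D) else a v with hr
      set μ : E × E → ℝ := fun p =>
        if f p.1 < c then a p.1 * a p.2 * (f p.2 - f p.1) / D else 0 with hμ
      -- key pointwise identities
      have key1 : ∀ v ∈ A, r v + ∑ w ∈ B, μ (v, w) = a v + a v * (c - f v) * tB / D := by
        intro v hv
        by_cases h : f v < c
        · have : ∑ w ∈ B, μ (v, w) = a v * S / D + a v * (c - f v) * tB / D := by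
            rw [hμ]
            simp only [h, if_true]
            rw [hS, htB, Finset.mul_sum, Finset.mul_sum, Finset.sum_div, Finset.sum_div,
              ← Finset.sum_add_distrib]
            refine Finset.sum_congr rfl fun w hw => ?_
            field_simp
            ring
          rw [this, hr]
          simp only [h, if_true]
          field_simp
          ring
        · have hfv : f v = c := le_antisymm (hAmem v hv).2 (not_lt.mp h)
          simp only [hr, hμ, h, if_false]
          rw [Finset.sum_eq_zero (fun w _ => rfl), hfv]
          ring
      have key2 : ∀ v ∈ A, r v • v + ∑ w ∈ B, μ (v, w) • m (v, w)
          = a v • v + (a v * (c - f v) / D) • zB := by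
        intro v hv
        by_cases h : f v < c
        · have hptw : ∀ w ∈ B, μ (v, w) • m (v, w)
              = (a v * a w * (f w - c) / D) • v + (a v * (c - f v) / D) • (a w • w) := by
            intro w hw
            have hd : (0:ℝ) < f w - f v := by linarith [(hBmem w hw).2]
            rw [hμ, hm]
            simp only [h, if_true]
            match_scalars <;> field_simp <;> ring
          rw [Finset.sum_congr rfl hptw, Finset.sum_add_distrib, ← Finset.smul_sum, ← hzB]
          have : ∑ w ∈ B, (a v * a w * (f w - c) / D) • v = (a v * S / D) • v := by
            rw [← Finset.sum_smul, hS, Finset.mul_sum, Finset.sum_div]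
            congr 1
            exact Finset.sum_congr rfl fun w hw => by ring
          rw [this, hr]
          simp only [h, if_true]
          match_scalars <;> field_simp <;> ring
        · have hfv : f v = c := le_antisymm (hAmem v hv).2 (not_lt.mp h)
          simp only [hr, hμ, h, if_false]
          rw [Finset.sum_eq_zero (fun w _ => (zero_smul ℝ _)), hfv]
          simp
      -- total weight is 1
      have hDiv : ∑ v ∈ A, a v * (c - f v) * tB / D = tB := by
        have : ∑ v ∈ A, a v * (c - f v) * tB / D = (∑ v ∈ A, a v * (c - f v)) * tB / D := by
          rw [Finset.sum_mul, Finset.sum_div]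
        rw [this, ← hD]
        field_simp
      have hsum1 : ∑ i ∈ A.disjSum (A ×ˢ B), Sum.elim r μ i = 1 := by
        rw [Finset.sum_disjSum]
        simp only [Sum.elim_inl, Sum.elim_inr]
        rw [Finset.sum_product, ← Finset.sum_add_distrib]
        rw [Finset.sum_congr rfl key1, Finset.sum_add_distrib, hDiv]
        exact hsplit1
      have hpt : ∑ i ∈ A.disjSum (A ×ˢ B), Sum.elim r μ i • Sum.elim id m i = x := by
        rw [Finset.sum_disjSum]
        simp only [Sum.elim_inl, Sum.elim_inr, id]
        rw [Finset.sum_product, ← Finset.sum_add_distrib]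
        rw [Finset.sum_congr rfl key2, Finset.sum_add_distrib]
        have : ∑ v ∈ A, (a v * (c - f v) / D) • zB = zB := by
          rw [← Finset.sum_smul, ← Finset.sum_div, ← hD, div_self hDz, one_smul]
        rw [this]
        exact hsplitx
      have := Finset.centerMass_mem_convexHull (s := ((A ∪ (A ×ˢ B).image m : Finset E) : Set E))
        (A.disjSum (A ×ˢ B))
        (w := Sum.elim r μ) (z := Sum.elim id m) ?_ (by rw [hsum1]; norm_num) ?_
      · rwa [Finset.centerMass_eq_of_sum_1 _ _ hsum1, hpt] at this
      · rintro (v | p) hi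
        · have hv := Finset.inl_mem_disjSum.mp hi
          simp only [Sum.elim_inl, hr]
          have h0 := ha0 v (hAmem v hv).1
          split
          · exact mul_nonneg h0 (by
              have : S / D ≤ 1 := (div_le_one hDpos).mpr hSD
              linarith)
          · exact h0
        · have hp := Finset.inr_mem_disjSum.mp hi
          rw [Finset.mem_product] at hp
          simp only [Sum.elim_inr, hμ]
          split
          · next h =>
            have := (hBmem p.2 hp.2).2
            exact div_nonneg (mul_nonneg (mul_nonneg (ha0 _ (hAmem _ hp.1).1)
              (ha0 _ (hBmem _ hp.2).1)) (by linarith)) hD0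
          · exact le_rfl
      · rintro (v | p) hi
        · have hv := Finset.inl_mem_disjSum.mp hi
          simp only [Sum.elim_inl, id]
          exact Finset.mem_coe.mpr (Finset.mem_union_left _ hv)
        · have hp := Finset.inr_mem_disjSum.mp hi
          simp only [Sum.elim_inr]
          exact Finset.mem_coe.mpr (Finset.mem_union_right _
            (Finset.mem_image.mpr ⟨p, hp, rfl⟩))
  · -- easy direction
    apply convexHull_min
    · intro y hy
      rw [Finset.coe_union, Set.mem_union] at hy
      rcases hy with hy | hy
      · obtain ⟨hyV, hyc⟩ := hAmem y hy
        exact ⟨subset_convexHull ℝ _ hyV, hyc⟩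
      · rw [Finset.coe_image, Set.mem_image] at hy
        obtain ⟨p, hp, rfl⟩ := hy
        rw [Finset.mem_coe, Finset.mem_product] at hp
        obtain ⟨h1, h2⟩ := hmseg p.1 hp.1 p.2 hp.2
        exact ⟨h1, le_of_eq h2⟩
    · exact (convex_convexHull ℝ _).inter (convex_halfSpace_le f.isLinear c)

lemma hull_inter_finite_halfspaces {E : Type*} [AddCommGroup E] [Module ℝ E]
    {ι : Type*} (g : ι → (E →ₗ[ℝ] ℝ)) (T : Finset ι) (V : Finset E) :
    ∃ W : Finset E,
      convexHull ℝ (V : Set E) ∩ {x | ∀ i ∈ T, g i x ≤ 0} = convexHull ℝ (W : Set E) := by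
  classical
  induction T using Finset.induction_on with
  | empty => exact ⟨V, by simp⟩
  | @insert a T ha ih =>
    obtain ⟨W, hW⟩ := ih
    obtain ⟨W', hW'⟩ := hull_inter_halfspace (g a) 0 W
    refine ⟨W', ?_⟩
    rw [← hW', ← hW]
    ext x
    simp only [Set.mem_inter_iff, Set.mem_setOf_eq, Finset.mem_insert]
    constructor
    · rintro ⟨hx, h⟩
      exact ⟨⟨hx, fun i hi => h i (Or.inr hi)⟩, h a (Or.inl rfl)⟩
    · rintro ⟨⟨hx, h⟩, h'⟩
      refine ⟨hx, fun i hi => ?_⟩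
      rcases hi with rfl | hi
      · exact h'
      · exact h i hi

/-- A set is a polytope if it is the convex hull of a finite set. -/
def IsPolytope {n : ℕ} (S : Set (Fin n → ℝ)) : Prop :=
  ∃ V : Finset (Fin n → ℝ), S = convexHull ℝ (V : Set (Fin n → ℝ))

/-- The exact ReLU-layer reachable set of a polytope is the union, over the 2^n
sign patterns, of the ReLU images of the orthant pieces, each of which is a
convex polytope. -/
theorem relu_layer_exact_reachable_set {n : ℕ} (V : Finset (Fin n → ℝ)) :
    ((fun (x : Fin n → ℝ) (i : Fin n) => max (x i) 0) ''
        convexHull ℝ (V : Set (Fin n → ℝ)) =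
      ⋃ ε : Fin n → Bool,
        (fun (x : Fin n → ℝ) (i : Fin n) => max (x i) 0) ''
          (convexHull ℝ (V : Set (Fin n → ℝ)) ∩
            {x | ∀ i, if ε i then 0 ≤ x i else x i ≤ 0})) ∧
    ∀ ε : Fin n → Bool,
      IsPolytope ((fun (x : Fin n → ℝ) (i : Fin n) => max (x i) 0) ''
        (convexHull ℝ (V : Set (Fin n → ℝ)) ∩
          {x | ∀ i, if ε i then 0 ≤ x i else x i ≤ 0})) := by
  constructor
  · ext y
    simp only [Set.mem_iUnion, Set.mem_image]
    constructor
    · rintro ⟨x, hx, rfl⟩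
      refine ⟨fun i => decide (0 ≤ x i), x, ⟨hx, fun i => ?_⟩, rfl⟩
      by_cases h : 0 ≤ x i <;> simp [h, le_of_not_ge]
    · rintro ⟨ε, x, ⟨hx, -⟩, rfl⟩
      exact ⟨x, hx, rfl⟩
  · intro ε
    classical
    set g : Fin n → ((Fin n → ℝ) →ₗ[ℝ] ℝ) :=
      fun i => if ε i then -(LinearMap.proj i) else LinearMap.proj i with hg
    have horth : {x : Fin n → ℝ | ∀ i, if ε i then 0 ≤ x i else x i ≤ 0}
        = {x | ∀ i ∈ (Finset.univ : Finset (Fin n)), g i x ≤ 0} := by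
      ext x
      simp only [Set.mem_setOf_eq, Finset.mem_univ, forall_true_left, hg]
      refine forall_congr' fun i => ?_
      cases h : ε i <;> simp [h, LinearMap.proj]
    obtain ⟨W, hW⟩ := hull_inter_finite_halfspaces g Finset.univ V
    set L : (Fin n → ℝ) →ₗ[ℝ] (Fin n → ℝ) :=
      LinearMap.pi (fun i => if ε i then LinearMap.proj i else 0) with hL
    have hrelu : ∀ x ∈ convexHull ℝ (V : Set (Fin n → ℝ)) ∩
        {x | ∀ i, if ε i then 0 ≤ x i else x i ≤ 0},
        (fun i => max (x i) 0) = L x := by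
      rintro x ⟨-, hx⟩
      funext i
      have h := hx i
      simp only [hL, LinearMap.pi_apply]
      cases he : ε i
      · rw [he] at h; simp only [if_neg Bool.false_ne_true] at h ⊢
        simpa using max_eq_right h
      · rw [he] at h; simp only [if_pos rfl] at h ⊢
        simpa [LinearMap.proj] using max_eq_left h
    refine ⟨W.image L, ?_⟩
    calc (fun (x : Fin n → ℝ) (i : Fin n) => max (x i) 0) ''
          (convexHull ℝ (V : Set (Fin n → ℝ)) ∩
            {x | ∀ i, if ε i then 0 ≤ x i else x i ≤ 0})
        = L '' (convexHull ℝ (V : Set (Fin n → ℝ)) ∩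
            {x | ∀ i, if ε i then 0 ≤ x i else x i ≤ 0}) := Set.image_congr hrelu
      _ = L '' (convexHull ℝ (W : Set (Fin n → ℝ))) := by rw [horth, hW]
      _ = convexHull ℝ ((W.image L : Finset (Fin n → ℝ)) : Set (Fin n → ℝ)) := by
          rw [L.image_convexHull, Finset.coe_image]
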